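/- arXiv:2211.12729 — 3 statements merged into one kernel-verified Lean document; each statement's English description precedes it below -/
import Mathlib

section
/- Let S be a compact connected smooth hypersurface in ℝ^{2n} (n ≥ 2) with everywhere positive Gaussian curvature, let Π₁(x,y) = x and Π₂(x,y) = y be the coordinate projections S → ℝⁿ, and let W₁ be the set of points of Π₁(S) that are regular values of Π₁. Then for every x ∈ W₁, the set Π₂(S_x), where S_x = Π₁⁻¹{x}, is a smooth hypersurface in ℝⁿ whose Gaussian curvature is bounded below by a positive constant independent of x. -/
/- STATEMENT 2:
Let S be a compact connected smooth hypersurface in ℝ^{2n} (n ≥ 2) with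
everywhere positive Gaussian curvature (positive definite second fundamental
form), let Π₁(x,y) = x and Π₂(x,y) = y be the coordinate projections S → ℝⁿ,
and let W₁ be the set of points of Π₁(S) that are regular values of Π₁.  Then
for every x ∈ W₁ the set Π₂(S_x), where S_x = Π₁⁻¹{x}, is a smooth
hypersurface in ℝⁿ whose Gaussian curvature is bounded below by a positive
constant c independent of x: for every unit normal field ν along N = Π₂(S_x),
the second fundamental form v ↦ -⟪dν(v), v⟫ is (up to the orientation of ν)
bounded below by c‖v‖² on tangent vectors, so every principal curvature of N
has magnitude ≥ c and hence the Gaussian curvature of N is ≥ c^{n-1} > 0. -/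

open MeasureTheory

noncomputable section

abbrev En (n : ℕ) : Type := EuclideanSpace ℝ (Fin n)

abbrev E2n (n : ℕ) : Type := EuclideanSpace ℝ (Fin n ⊕ Fin n)

def P1 {n : ℕ} (z : E2n n) : En n := WithLp.toLp 2 (fun i => z (Sum.inl i))

def P2 {n : ℕ} (z : E2n n) : En n := WithLp.toLp 2 (fun i => z (Sum.inr i))

/-- `S` is a smooth hypersurface: near each of its points it is the zero set
of a smooth defining function with nonvanishing differential. -/
def IsSmoothHypersurface {E : Type*} [NormedAddCommGroup E] [NormedSpace ℝ E]
    (S : Set E) : Prop :=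
  ∀ p ∈ S, ∃ (U : Set E) (f : E → ℝ), IsOpen U ∧ p ∈ U ∧ ContDiff ℝ (⊤ : ℕ∞) f ∧
    S ∩ U = {q ∈ U | f q = 0} ∧ ∀ q ∈ S ∩ U, fderiv ℝ f q ≠ 0

/-- `S` is a smooth hypersurface with positive Gaussian curvature
(positive definite second fundamental form). -/
def IsPosCurvHypersurface {E : Type*} [NormedAddCommGroup E] [NormedSpace ℝ E]
    (S : Set E) : Prop :=
  ∀ p ∈ S, ∃ (U : Set E) (f : E → ℝ), IsOpen U ∧ p ∈ U ∧ ContDiff ℝ (⊤ : ℕ∞) f ∧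
    S ∩ U = {q ∈ U | f q = 0} ∧
    ∀ q ∈ S ∩ U, fderiv ℝ f q ≠ 0 ∧
      ∀ v : E, fderiv ℝ f q v = 0 → v ≠ 0 → 0 < fderiv ℝ (fderiv ℝ f) q v v

/-- `p` is a regular point of the projection `Π₁ : S → ℝⁿ`. -/
def RegularPointPi1 {n : ℕ} (S : Set (E2n n)) (p : E2n n) : Prop :=
  ∀ u : En n, ∃ v ∈ Submodule.span ℝ (tangentConeAt ℝ S p), P1 v = u

/-- `Π₂(S_x)`, the image under `Π₂` of the fiber `S_x = Π₁⁻¹{x}`. -/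
def FiberImage {n : ℕ} (S : Set (E2n n)) (x : En n) : Set (En n) :=
  P2 '' {p ∈ S | P1 p = x}

/-! ### Auxiliary material -/

open Filter Set Topology
open scoped RealInnerProductSpace

section Aux

/-- pairing two points of `ℝⁿ` into a point of `ℝ²ⁿ` -/
def pr {n : ℕ} (x y : En n) : E2n n := WithLp.toLp 2 (fun j => Sum.elim x y j)

@[simp] lemma P1_pr {n : ℕ} (x y : En n) : P1 (pr x y) = x := rfl
@[simp] lemma P2_pr {n : ℕ} (x y : En n) : P2 (pr x y) = y := rfl

lemma pr_eta {n : ℕ} (p : E2n n) : pr (P1 p) (P2 p) = p := by ext j; cases j <;> rfl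

lemma pr_add {n : ℕ} (x y x' y' : En n) : pr x y + pr x' y' = pr (x + x') (y + y') := by
  ext j; cases j <;> rfl

lemma pr_smul {n : ℕ} (c : ℝ) (x y : En n) : c • pr x y = pr (c • x) (c • y) := by
  ext j; cases j <;> rfl

lemma mem_fiberImage_iff {n : ℕ} {S : Set (E2n n)} {x y : En n} :
    y ∈ FiberImage S x ↔ pr x y ∈ S := by
  constructor
  · rintro ⟨p, ⟨hpS, hpx⟩, rfl⟩; rwa [← hpx, pr_eta]
  · intro h; exact ⟨pr x y, ⟨h, rfl⟩, rfl⟩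

/-- inclusion `v ↦ (0, v)` as a linear isometry -/
def Jiso {n : ℕ} : En n →ₗᵢ[ℝ] E2n n :=
  { toFun := fun v => pr 0 v
    map_add' := fun v w => by
      have := pr_add (n := n) 0 v 0 w; rw [add_zero] at this; exact this.symm
    map_smul' := fun c v => by
      have := pr_smul c (0 : En n) v; rw [smul_zero] at this; exact this.symm
    norm_map' := fun v => by
      rw [EuclideanSpace.norm_eq, EuclideanSpace.norm_eq]
      congr 1; rw [Fintype.sum_sum_type]; simp [pr] }

def JL {n : ℕ} : En n →L[ℝ] E2n n := Jiso.toContinuousLinearMap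

@[simp] lemma JL_apply {n : ℕ} (v : En n) : JL v = pr 0 v := rfl
@[simp] lemma norm_JL {n : ℕ} (v : En n) : ‖JL v‖ = ‖v‖ := Jiso.norm_map v

lemma pr_eq_add {n : ℕ} (x y : En n) : pr x y = pr x 0 + JL y := by
  rw [JL_apply, pr_add, add_zero, zero_add]

lemma decomp {n : ℕ} (z : E2n n) : z = pr (P1 z) 0 + JL (P2 z) := by
  rw [JL_apply, pr_add, add_zero, zero_add, pr_eta]

/-- If `f` is differentiable at `p` and vanishes on `A ∩ U` with `U` open,
then its derivative kills the tangent cone of `A` at `p ∈ A ∩ U`. -/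
lemma cone_subset_ker {E F : Type*} [NormedAddCommGroup E] [NormedSpace ℝ E]
    [NormedAddCommGroup F] [NormedSpace ℝ F]
    {f : E → F} {A U : Set E} {p : E} (hU : IsOpen U) (hpU : p ∈ U) (hpA : p ∈ A)
    (h0 : ∀ a ∈ A ∩ U, f a = 0) (hfd : DifferentiableAt ℝ f p) :
    ∀ v ∈ tangentConeAt ℝ A p, fderiv ℝ f p v = 0 := by
  intro v hv
  have hv' : v ∈ tangentConeAt ℝ (A ∩ U) p := by
    rwa [tangentConeAt_inter_nhds (hU.mem_nhds hpU)]
  have h1 : HasFDerivWithinAt f (fderiv ℝ f p) (A ∩ U) p :=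
    hfd.hasFDerivAt.hasFDerivWithinAt
  have h2 : HasFDerivWithinAt f (0 : E →L[ℝ] F) (A ∩ U) p :=
    (hasFDerivWithinAt_const _ _ _).congr (fun a ha => h0 a ha) (h0 p ⟨hpA, hpU⟩)
  simpa using h1.unique_on h2 hv'

/-- Every kernel vector of the differential lies in the tangent cone of the level set. -/
lemma ker_subset_cone {E : Type*} [NormedAddCommGroup E] [NormedSpace ℝ E] [CompleteSpace E]
    {g : E → ℝ} {V N : Set E} {y : E} (hV : IsOpen V) (hyV : y ∈ V)
    (hg : ContDiff ℝ (⊤ : ℕ∞) g) (hNV : N ∩ V = {z ∈ V | g z = 0}) (hgy : g y = 0)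
    (hder : fderiv ℝ g y ≠ 0) {w : E} (hw : fderiv ℝ g y w = 0) :
    w ∈ tangentConeAt ℝ N y := by
  set f' := fderiv ℝ g y with hf'
  have hstrict : HasStrictFDerivAt g f' y :=
    hg.contDiffAt.hasStrictFDerivAt (by simp)
  have hsurj : f'.range = ⊤ := by
    rw [Submodule.eq_top_iff']
    intro r
    obtain ⟨u, hu⟩ : ∃ u, f' u ≠ 0 := by
      by_contra h
      push_neg at h
      exact hder (ContinuousLinearMap.ext fun u => by simp [h u])
    exact ⟨(r / f' u) • u, by rw [_root_.map_smul, ContinuousLinearMap.coe_coe, smul_eq_mul]; field_simp⟩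
  set z : f'.ker := ⟨w, hw⟩ with hz
  set ψ := hstrict.implicitFunction g f' hsurj with hψ
  set θ : ℝ → E := fun t => ψ (g y) (t • z) with hθdef
  have hψ0 : ψ (g y) 0 = y := hstrict.implicitFunction_apply_image hsurj
  have hθ0 : θ 0 = y := by simp [hθdef, hψ0]
  have hψder : HasStrictFDerivAt (ψ (g y)) (f'.ker).subtypeL 0 :=
    hstrict.to_implicitFunction hsurj
  have h1 : HasDerivAt (fun t : ℝ => t • z) z 0 := by
    simpa using (hasDerivAt_id (0:ℝ)).smul_const z
  have hψder' : HasFDerivAt (ψ (g y)) (f'.ker).subtypeL ((0:ℝ) • z) := by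
    rw [zero_smul]; exact hψder.hasFDerivAt
  have hθ : HasDerivAt θ w 0 := by
    have h2 := hψder'.comp_hasDerivAt (0:ℝ) h1
    simpa [hθdef, hz, Function.comp_def] using h2
  have hevg : ∀ᶠ p : ℝ × ↥(f'.ker) in 𝓝 (g y, 0), g (ψ p.1 p.2) = p.1 :=
    hstrict.map_implicitFunction_eq hsurj
  have hinv : Tendsto (fun k : ℕ => ((k:ℝ))⁻¹) atTop (𝓝 0) :=
    tendsto_inv_atTop_nhds_zero_nat
  have htpair : Tendsto (fun k : ℕ => ((g y : ℝ), ((k:ℝ)⁻¹ • z))) atTop (𝓝 (g y, 0)) := by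
    refine Tendsto.prodMk_nhds tendsto_const_nhds ?_
    simpa using hinv.smul_const z
  have hev1 : ∀ᶠ k : ℕ in atTop, g (θ ((k:ℝ)⁻¹)) = g y := htpair.eventually hevg
  have hθc : Tendsto (fun k : ℕ => θ ((k:ℝ)⁻¹)) atTop (𝓝 y) := by
    rw [← hθ0]
    exact (hθ.continuousAt.tendsto).comp hinv
  have hev2 : ∀ᶠ k : ℕ in atTop, θ ((k:ℝ)⁻¹) ∈ V := hθc.eventually (hV.mem_nhds hyV)
  have hevN : ∀ᶠ k : ℕ in atTop, θ ((k:ℝ)⁻¹) ∈ N := by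
    filter_upwards [hev1, hev2] with k h1k h2k
    have : θ ((k:ℝ)⁻¹) ∈ N ∩ V := by
      rw [hNV]; exact ⟨h2k, by rw [h1k, hgy]⟩
    exact this.1
  refine mem_tangentConeAt_of_seq atTop (fun k : ℕ => (k:ℝ)) (fun k : ℕ => θ ((k:ℝ)⁻¹) - y) ?_ ?_ ?_
  · simpa using hθc.sub_const y
  · filter_upwards [hevN] with k hk
    simpa using hk
  · have hslope : Tendsto (slope θ 0) (𝓝[≠] 0) (𝓝 w) := hasDerivAt_iff_tendsto_slope.1 hθ
    have hinv' : Tendsto (fun k : ℕ => ((k:ℝ))⁻¹) atTop (𝓝[≠] 0) := by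
      refine tendsto_nhdsWithin_of_tendsto_nhds_of_eventually_within _ hinv ?_
      filter_upwards [eventually_gt_atTop 0] with k hk
      have : (0:ℝ) < (k:ℝ) := by exact_mod_cast hk
      simp [ne_of_gt (inv_pos.2 this)]
    have := hslope.comp hinv'
    refine this.congr' ?_
    filter_upwards with k
    simp [slope_def_field, slope, hθ0, vsub_eq_sub]

/-- Main local computation: for a unit normal field along `N`, the derivative paired with a
tangent vector is given by the Hessian of a defining function, up to normalization. -/
lemma local_formula {E : Type*} [NormedAddCommGroup E] [InnerProductSpace ℝ E]
    [FiniteDimensional ℝ E]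
    {g : E → ℝ} {V N : Set E} (hV : IsOpen V)
    (hg : ContDiff ℝ (⊤ : ℕ∞) g) (hNV : N ∩ V = {z ∈ V | g z = 0})
    (hreg : ∀ y ∈ N ∩ V, fderiv ℝ g y ≠ 0)
    {ν : E → E} {q : E} (hq : q ∈ N ∩ V)
    (hν1 : ∀ y ∈ N, ‖ν y‖ = 1)
    (hν2 : ∀ y ∈ N, ∀ v ∈ tangentConeAt ℝ N y, ⟪ν y, v⟫ = 0)
    (hν3 : DifferentiableWithinAt ℝ ν N q) :
    ∀ v ∈ tangentConeAt ℝ N q,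
      ‖fderiv ℝ g q‖ * |⟪fderivWithin ℝ ν N q v, v⟫| =
        |fderiv ℝ (fderiv ℝ g) q v v| := by
  have hgzero : ∀ y ∈ N ∩ V, g y = 0 := fun y hy => by
    rw [hNV] at hy; exact hy.2
  set Φ := (InnerProductSpace.toDual ℝ E).symm with hΦ
  set grad : E → E := fun y => Φ (fderiv ℝ g y) with hgrad
  have hgradval : ∀ y w, ⟪grad y, w⟫ = fderiv ℝ g y w := fun y w =>
    InnerProductSpace.toDual_symm_apply
  have hgradnorm : ∀ y, ‖grad y‖ = ‖fderiv ℝ g y‖ := fun y => by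
    simp [hgrad, hΦ]
  have hcone : ∀ y ∈ N ∩ V, ∀ v : E,
      (v ∈ tangentConeAt ℝ N y ↔ fderiv ℝ g y v = 0) := by
    intro y hy v
    constructor
    · intro hv
      exact cone_subset_ker hV hy.2 hy.1 hgzero
        (hg.differentiable (by simp) y) v hv
    · intro hv
      exact ker_subset_cone hV hy.2 hg hNV (hgzero y hy) (hreg y hy) hv
  have hgradne : ∀ y ∈ N ∩ V, grad y ≠ 0 := by
    intro y hy h0
    apply hreg y hy
    have := hgradnorm y
    rw [h0, norm_zero] at this
    exact (norm_eq_zero.1 this.symm)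
  set G : E → E := fun y => ‖grad y‖⁻¹ • grad y with hG
  have hspan : ∀ y ∈ N ∩ V, ν y = ⟪ν y, G y⟫ • G y ∧ |⟪ν y, G y⟫| = 1 := by
    intro y hy
    have horth : ∀ v : E, ⟪grad y, v⟫ = 0 → ⟪ν y, v⟫ = 0 := by
      intro v hv
      refine hν2 y hy.1 v ((hcone y hy v).2 ?_)
      rw [← hgradval]; exact hv
    have hmem : ν y ∈ (ℝ ∙ grad y) := by
      rw [← Submodule.orthogonal_orthogonal (ℝ ∙ grad y)]
      rw [Submodule.mem_orthogonal]
      intro u hu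
      rw [Submodule.mem_orthogonal_singleton_iff_inner_right] at hu
      rw [real_inner_comm]
      exact horth u hu
    obtain ⟨t, ht⟩ := Submodule.mem_span_singleton.1 hmem
    have hgn : ‖grad y‖ ≠ 0 := norm_ne_zero_iff.2 (hgradne y hy)
    have hnorm1 : ‖ν y‖ = 1 := hν1 y hy.1
    have habs : |t| * ‖grad y‖ = 1 := by
      rw [← ht, norm_smul, Real.norm_eq_abs] at hnorm1
      exact hnorm1
    have hip : ⟪ν y, G y⟫ = t * ‖grad y‖ := by
      rw [← ht, hG]
      simp only [real_inner_smul_left, real_inner_smul_right, real_inner_self_eq_norm_sq]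
      field_simp
    constructor
    · rw [hip, hG, ← ht, smul_smul]
      congr 1
      field_simp
    · rw [hip, abs_mul, abs_of_nonneg (norm_nonneg _)]
      exact habs
  obtain ⟨hqN, hqV⟩ := hq
  have hfC : ContDiff ℝ (⊤ : ℕ∞) (fderiv ℝ g) := hg.fderiv_right (by exact_mod_cast le_top)
  set D2 := fderiv ℝ (fderiv ℝ g) q with hD2def
  have hD2 : HasFDerivAt (fderiv ℝ g) D2 q :=
    ((hfC.differentiable (by simp)) q).hasFDerivAt
  set L : E →L[ℝ] E := InnerProductSpace.continuousLinearMapOfBilin D2 with hL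
  have hLval : ∀ v w : E, ⟪L v, w⟫ = D2 v w := fun v w =>
    InnerProductSpace.continuousLinearMapOfBilin_apply D2 v w
  have hLgrad : ∀ v, L v = Φ (D2 v) := by
    intro v
    refine ext_inner_right ℝ fun w => ?_
    rw [hLval]
    exact (InnerProductSpace.toDual_symm_apply).symm
  have hgradD : HasFDerivAt grad L q := by
    rw [hasFDerivAt_iff_isLittleO_nhds_zero] at hD2 ⊢
    rw [← Asymptotics.isLittleO_norm_left] at hD2 ⊢
    refine hD2.congr' ?_ (Eventually.of_forall fun y => rfl)
    refine Eventually.of_forall fun y => ?_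
    show ‖fderiv ℝ g (q + y) - fderiv ℝ g q - D2 y‖ = ‖grad (q + y) - grad q - L y‖
    rw [hgrad]
    simp only []
    rw [hLgrad, ← map_sub, ← map_sub, LinearIsometryEquiv.norm_map]
  have hgradqne : grad q ≠ 0 := hgradne q ⟨hqN, hqV⟩
  have hgradnormne : ‖grad q‖ ≠ 0 := norm_ne_zero_iff.2 hgradqne
  have hnormdiff : DifferentiableAt ℝ (fun y => ‖grad y‖) q :=
    hgradD.differentiableAt.norm ℝ hgradqne
  have hinvdiff : DifferentiableAt ℝ (fun y => ‖grad y‖⁻¹) q :=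
    hnormdiff.inv hgradnormne
  set c' := fderiv ℝ (fun y => ‖grad y‖⁻¹) q with hc'
  have hGD : HasFDerivAt G (‖grad q‖⁻¹ • L + c'.smulRight (grad q)) q :=
    hinvdiff.hasFDerivAt.smul hgradD
  set σ := ⟪ν q, G q⟫ with hσdef
  have hσ : |σ| = 1 := (hspan q ⟨hqN, hqV⟩).2
  have hνq : ν q = σ • G q := (hspan q ⟨hqN, hqV⟩).1
  have heps : ∀ᶠ y in 𝓝[N] q, ν y = σ • G y := by
    have h1 : ∀ᶠ y in 𝓝[N] q, y ∈ N := self_mem_nhdsWithin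
    have h2 : ∀ᶠ y in 𝓝[N] q, y ∈ V :=
      mem_nhdsWithin_of_mem_nhds (hV.mem_nhds hqV)
    have hcont : ContinuousWithinAt (fun y => ⟪ν y, G y⟫) N q :=
      hν3.continuousWithinAt.inner (hGD.continuousAt.continuousWithinAt)
    have hlt : ∀ᶠ y in 𝓝[N] q, |⟪ν y, G y⟫ - σ| < 1 := by
      have hball := hcont (Metric.ball_mem_nhds σ one_pos)
      filter_upwards [hball] with y hy
      simpa [Real.dist_eq] using hy
    filter_upwards [h1, h2, hlt] with y hyN hyV hylt
    obtain ⟨heq, habs1⟩ := hspan y ⟨hyN, hyV⟩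
    have hyσ : ⟪ν y, G y⟫ = σ := by
      rcases (abs_eq (by norm_num : (0:ℝ) ≤ 1)).1 habs1 with h | h <;>
        rcases (abs_eq (by norm_num : (0:ℝ) ≤ 1)).1 hσ with h' | h' <;>
        rw [h, h'] at hylt ⊢ <;> norm_num at hylt
    rw [heq, hyσ]
  have hνder : HasFDerivWithinAt ν
      (σ • (‖grad q‖⁻¹ • L + c'.smulRight (grad q))) N q := by
    have h1 : HasFDerivAt (fun y => σ • G y)
        (σ • (‖grad q‖⁻¹ • L + c'.smulRight (grad q))) q := hGD.const_smul σ
    exact h1.hasFDerivWithinAt.congr_of_eventuallyEq heps hνq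
  intro v hv
  have hker : fderiv ℝ g q v = 0 := (hcone q ⟨hqN, hqV⟩ v).1 hv
  have huniq := (hν3.hasFDerivWithinAt.unique_on hνder) hv
  have hval : ⟪fderivWithin ℝ ν N q v, v⟫ = σ * (‖grad q‖⁻¹ * D2 v v) := by
    rw [huniq]
    simp only [ContinuousLinearMap.add_apply, ContinuousLinearMap.smul_apply,
      ContinuousLinearMap.smulRight_apply]
    rw [real_inner_smul_left, inner_add_left, real_inner_smul_left,
      real_inner_smul_left, hLval]
    have : ⟪grad q, v⟫ = 0 := by rw [hgradval]; exact hker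
    rw [this]
    ring
  rw [hval, abs_mul, hσ, one_mul, abs_mul, abs_inv, abs_norm, ← hgradnorm]
  field_simp

section Transfer
variable {n : ℕ} (f : E2n n → ℝ) (x : En n)

lemma contDiff_gx (hf : ContDiff ℝ (⊤ : ℕ∞) f) :
    ContDiff ℝ (⊤ : ℕ∞) (fun y : En n => f (pr x y)) := by
  have h1 : ContDiff ℝ (⊤ : ℕ∞) (fun y : En n => pr x 0 + JL y) :=
    contDiff_const.add JL.contDiff
  have h2 := hf.comp h1
  have : (fun y : En n => f (pr x y)) = f ∘ fun y : En n => pr x 0 + JL y := by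
    funext y; rw [Function.comp_apply, ← pr_eq_add]
  rw [this]
  exact h2

lemma hasFDerivAt_gx (hf : ContDiff ℝ (⊤ : ℕ∞) f) (y : En n) :
    HasFDerivAt (fun y : En n => f (pr x y)) ((fderiv ℝ f (pr x y)).comp JL) y := by
  have hA : HasFDerivAt (fun y : En n => pr x 0 + JL y) (JL : En n →L[ℝ] E2n n) y :=
    JL.hasFDerivAt.const_add (pr x 0)
  have hfd : HasFDerivAt f (fderiv ℝ f (pr x y)) (pr x y) :=
    ((hf.differentiable (by simp)) (pr x y)).hasFDerivAt
  have hfd' : HasFDerivAt f (fderiv ℝ f (pr x y)) (pr x 0 + JL y) := by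
    rwa [← pr_eq_add]
  have := hfd'.comp y hA
  refine this.congr_of_eventuallyEq (Eventually.of_forall fun z => ?_)
  rw [Function.comp_apply, ← pr_eq_add]

lemma fderiv_gx (hf : ContDiff ℝ (⊤ : ℕ∞) f) (y : En n) :
    fderiv ℝ (fun y : En n => f (pr x y)) y = (fderiv ℝ f (pr x y)).comp JL :=
  (hasFDerivAt_gx f x hf y).fderiv

lemma fderiv2_gx (hf : ContDiff ℝ (⊤ : ℕ∞) f) (q : En n) (v w : En n) :
    fderiv ℝ (fderiv ℝ (fun y : En n => f (pr x y))) q v w =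
      fderiv ℝ (fderiv ℝ f) (pr x q) (JL v) (JL w) := by
  set Ψ : (E2n n →L[ℝ] ℝ) →L[ℝ] (En n →L[ℝ] ℝ) :=
    (ContinuousLinearMap.compL ℝ (En n) (E2n n) ℝ).flip JL with hΨ
  have hΨval : ∀ M : E2n n →L[ℝ] ℝ, Ψ M = M.comp JL := fun M => rfl
  have hfC : ContDiff ℝ (⊤ : ℕ∞) (fderiv ℝ f) := hf.fderiv_right (by exact_mod_cast le_top)
  have hD2f : HasFDerivAt (fderiv ℝ f) (fderiv ℝ (fderiv ℝ f) (pr x q)) (pr x q) :=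
    ((hfC.differentiable (by simp)) (pr x q)).hasFDerivAt
  have hA : HasFDerivAt (fun y : En n => pr x 0 + JL y) (JL : En n →L[ℝ] E2n n) q :=
    JL.hasFDerivAt.const_add (pr x 0)
  have hD2f' : HasFDerivAt (fderiv ℝ f) (fderiv ℝ (fderiv ℝ f) (pr x q)) (pr x 0 + JL q) := by
    rwa [← pr_eq_add]
  have hcomp : HasFDerivAt (fun y : En n => fderiv ℝ f (pr x y))
      ((fderiv ℝ (fderiv ℝ f) (pr x q)).comp JL) q := by
    have := hD2f'.comp q hA
    refine this.congr_of_eventuallyEq (Eventually.of_forall fun z => ?_)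
    rw [Function.comp_apply, ← pr_eq_add]
  have hΨcomp : HasFDerivAt (fun y : En n => Ψ (fderiv ℝ f (pr x y)))
      (Ψ.comp ((fderiv ℝ (fderiv ℝ f) (pr x q)).comp JL)) q :=
    Ψ.hasFDerivAt.comp q hcomp
  have heq : (fun y : En n => Ψ (fderiv ℝ f (pr x y))) =
      fderiv ℝ (fun y : En n => f (pr x y)) := by
    funext y
    rw [hΨval, fderiv_gx f x hf y]
  rw [heq] at hΨcomp
  rw [hΨcomp.fderiv]
  rfl

lemma norm_fderiv_gx_le (hf : ContDiff ℝ (⊤ : ℕ∞) f) (y : En n) :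
    ‖fderiv ℝ (fun y : En n => f (pr x y)) y‖ ≤ ‖fderiv ℝ f (pr x y)‖ := by
  rw [fderiv_gx f x hf y]
  calc ‖(fderiv ℝ f (pr x y)).comp JL‖ ≤ ‖fderiv ℝ f (pr x y)‖ * ‖(JL : En n →L[ℝ] E2n n)‖ :=
        ContinuousLinearMap.opNorm_comp_le _ _
    _ ≤ ‖fderiv ℝ f (pr x y)‖ * 1 := by
        refine mul_le_mul_of_nonneg_left ?_ (norm_nonneg _)
        exact Jiso.norm_toContinuousLinearMap_le
    _ = ‖fderiv ℝ f (pr x y)‖ := mul_one _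

end Transfer

lemma fiber_inter {n : ℕ} {S : Set (E2n n)} {U : Set (E2n n)} {f : E2n n → ℝ} (x : En n)
    (hSU : S ∩ U = {z ∈ U | f z = 0}) :
    FiberImage S x ∩ {y | pr x y ∈ U} =
      {y ∈ {y : En n | pr x y ∈ U} | f (pr x y) = 0} := by
  ext y
  simp only [Set.mem_inter_iff, Set.mem_setOf_eq, mem_fiberImage_iff]
  constructor
  · rintro ⟨hyS, hyU⟩
    have : pr x y ∈ S ∩ U := ⟨hyS, hyU⟩
    rw [hSU] at this
    exact ⟨this.1, this.2⟩
  · rintro ⟨hyU, hyf⟩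
    have : pr x y ∈ S ∩ U := by rw [hSU]; exact ⟨hyU, hyf⟩
    exact ⟨this.1, this.2⟩

lemma gx_deriv_ne {n : ℕ} {S U : Set (E2n n)} {f : E2n n → ℝ} {x q : En n}
    (hf : ContDiff ℝ (⊤ : ℕ∞) f) (hq : pr x q ∈ S) (hUo : IsOpen U) (hqU : pr x q ∈ U)
    (hSU : S ∩ U = {z ∈ U | f z = 0}) (hfne : fderiv ℝ f (pr x q) ≠ 0)
    (hregp : RegularPointPi1 S (pr x q)) :
    fderiv ℝ (fun y : En n => f (pr x y)) q ≠ 0 := by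
  have hzero : ∀ a ∈ S ∩ U, f a = 0 := fun a ha => by rw [hSU] at ha; exact ha.2
  have hconeker := cone_subset_ker hUo hqU hq hzero
    ((hf.differentiable (by simp)) (pr x q))
  have hspan : ∀ v ∈ Submodule.span ℝ (tangentConeAt ℝ S (pr x q)),
      fderiv ℝ f (pr x q) v = 0 := by
    intro v hv
    have hle : Submodule.span ℝ (tangentConeAt ℝ S (pr x q)) ≤
        LinearMap.ker (fderiv ℝ f (pr x q) : E2n n →ₗ[ℝ] ℝ) :=
      Submodule.span_le.2 fun w hw => LinearMap.mem_ker.2 (hconeker w hw)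
    exact LinearMap.mem_ker.1 (hle hv)
  intro h
  have hJ : ∀ v : En n, fderiv ℝ f (pr x q) (JL v) = 0 := by
    intro v
    have := fderiv_gx f x hf q
    rw [h] at this
    have h2 := congrArg (fun (M : En n →L[ℝ] ℝ) => M v) this
    simpa using h2.symm
  obtain ⟨z, hz⟩ : ∃ z, fderiv ℝ f (pr x q) z ≠ 0 := by
    by_contra hcon
    push_neg at hcon
    exact hfne (ContinuousLinearMap.ext fun z => by simp [hcon z])
  have hz1 : fderiv ℝ f (pr x q) (pr (P1 z) 0) ≠ 0 := by
    intro h0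
    apply hz
    rw [decomp z, map_add, h0, hJ, add_zero]
  obtain ⟨v, hvspan, hvP1⟩ := hregp (P1 z)
  have hv0 : fderiv ℝ f (pr x q) v = 0 := hspan v hvspan
  rw [decomp v, map_add, hJ, add_zero, hvP1] at hv0
  exact hz1 hv0

/-- tangent cone of the fiber image lifts into the tangent cone of `S` -/
lemma cone_lift {n : ℕ} {S : Set (E2n n)} {x q : En n} {v : En n}
    (hv : v ∈ tangentConeAt ℝ (FiberImage S x) q) :
    JL v ∈ tangentConeAt ℝ S (pr x q) := by
  obtain ⟨α, l, hl, c, d, hd0, hd, hcd⟩ := exists_fun_of_mem_tangentConeAt hv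
  refine mem_tangentConeAt_of_seq l c (fun k => JL (d k)) ?_ ?_ ?_
  · have := (JL.continuous.tendsto 0).comp hd0; rwa [map_zero] at this
  · filter_upwards [hd] with k hk
    have : pr x q + JL (d k) = pr x (q + d k) := by
      rw [JL_apply, pr_add, add_zero]
    rw [this]
    exact mem_fiberImage_iff.1 hk
  · have : (fun k => c k • JL (d k)) = fun k => JL (c k • d k) := by
      funext k; rw [_root_.map_smul]
    rw [this]
    exact (JL.continuous.tendsto v).comp hcd

end Aux


set_option maxHeartbeats 1000000 in
theorem statement2 (n : ℕ) (hn : 2 ≤ n)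
    (S : Set (E2n n)) (hScpt : IsCompact S) (hSconn : IsConnected S)
    (hS : IsPosCurvHypersurface S) :
    ∃ c : ℝ, 0 < c ∧
      ∀ x : En n,
        (x ∈ P1 '' S ∧ ∀ p ∈ S, P1 p = x → RegularPointPi1 S p) →
        IsSmoothHypersurface (FiberImage S x) ∧
        ∀ ν : En n → En n,
          (∀ q ∈ FiberImage S x, ‖ν q‖ = 1) →
          (∀ q ∈ FiberImage S x, ∀ v ∈ tangentConeAt ℝ (FiberImage S x) q,
            (@inner ℝ _ _ (ν q) v : ℝ) = 0) →
          (∀ q ∈ FiberImage S x, DifferentiableWithinAt ℝ ν (FiberImage S x) q) →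
          ∀ q ∈ FiberImage S x, ∀ v ∈ tangentConeAt ℝ (FiberImage S x) q,
            c * ‖v‖ ^ 2 ≤
              |(@inner ℝ _ _ (fderivWithin ℝ ν (FiberImage S x) q v) v : ℝ)| := by
  classical
  choose U f hUo hpU hf hSU hfprop using hS
  -- radii for a compact shrinking of the cover
  have hrad : ∀ p, ∀ hp : p ∈ S, ∃ r : ℝ, 0 < r ∧ Metric.closedBall p r ⊆ U p hp := by
    intro p hp
    obtain ⟨r, hr0, hrsub⟩ := Metric.isOpen_iff.1 (hUo p hp) p (hpU p hp)
    exact ⟨r/2, by positivity,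
      (Metric.closedBall_subset_ball (by linarith)).trans hrsub⟩
  choose r hr0 hrsub using hrad
  obtain ⟨t, ht⟩ := hScpt.elim_finite_subcover
    (fun i : ↥S => Metric.ball i.1 (r i.1 i.2))
    (fun i => Metric.isOpen_ball)
    (fun p hp => Set.mem_iUnion.2 ⟨⟨p, hp⟩, Metric.mem_ball_self (hr0 p hp)⟩)
  -- uniform lower curvature bound on each piece
  have key : ∀ i : ↥S, ∃ lam : ℝ, 0 < lam ∧ ∀ p w : E2n n, p ∈ S →
      p ∈ Metric.closedBall i.1 (r i.1 i.2) → ‖w‖ = 1 →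
      fderiv ℝ (f i.1 i.2) p w = 0 →
      lam ≤ fderiv ℝ (fderiv ℝ (f i.1 i.2)) p w w / ‖fderiv ℝ (f i.1 i.2) p‖ := by
    intro i
    set f0 := f i.1 i.2 with hf0
    set T : Set (E2n n × E2n n) :=
      {pw | pw.1 ∈ S ∧ pw.1 ∈ Metric.closedBall i.1 (r i.1 i.2) ∧ ‖pw.2‖ = 1 ∧
        fderiv ℝ f0 pw.1 pw.2 = 0} with hT
    have hfC : ContDiff ℝ (⊤ : ℕ∞) (fderiv ℝ f0) :=
      (hf i.1 i.2).fderiv_right (by exact_mod_cast le_top)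
    have hf2C : ContDiff ℝ (⊤ : ℕ∞) (fderiv ℝ (fderiv ℝ f0)) :=
      hfC.fderiv_right (by exact_mod_cast le_top)
    have hcont1 : Continuous fun pw : E2n n × E2n n => fderiv ℝ f0 pw.1 pw.2 :=
      ((hfC.continuous.comp continuous_fst).clm_apply continuous_snd)
    have hcont2 : Continuous fun pw : E2n n × E2n n =>
        fderiv ℝ (fderiv ℝ f0) pw.1 pw.2 pw.2 :=
      (((hf2C.continuous.comp continuous_fst).clm_apply continuous_snd).clm_apply
        continuous_snd)
    have hcont3 : Continuous fun pw : E2n n × E2n n => ‖fderiv ℝ f0 pw.1‖ :=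
      (hfC.continuous.comp continuous_fst).norm
    have hTclosed : IsClosed T := by
      refine IsClosed.inter (hScpt.isClosed.preimage continuous_fst) ?_
      refine IsClosed.inter (Metric.isClosed_closedBall.preimage continuous_fst) ?_
      refine IsClosed.inter (isClosed_eq (continuous_snd.norm) continuous_const) ?_
      exact isClosed_eq hcont1 continuous_const
    have hTbdd : Bornology.IsBounded T := by
      have hb : Bornology.IsBounded
          ((Metric.closedBall i.1 (r i.1 i.2)) ×ˢ (Metric.closedBall (0:E2n n) 1)) :=
        (Metric.isBounded_closedBall).prod (Metric.isBounded_closedBall)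
      refine hb.subset fun pw hpw => Set.mem_prod.2 ⟨hpw.2.1, ?_⟩
      simp only [Metric.mem_closedBall, dist_zero_right]
      rw [hpw.2.2.1]
    have hTcpt : IsCompact T := Metric.isCompact_of_isClosed_isBounded hTclosed hTbdd
    have hTsub : ∀ pw ∈ T, pw.1 ∈ S ∩ U i.1 i.2 := fun pw hpw =>
      ⟨hpw.1, hrsub i.1 i.2 hpw.2.1⟩
    rcases T.eq_empty_or_nonempty with hTe | hTne
    · refine ⟨1, one_pos, fun p w hpS hpcb hw1 hw0 => ?_⟩
      exact absurd (Set.eq_empty_iff_forall_notMem.1 hTe (p, w))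
        (by intro hcon; exact hcon ⟨hpS, hpcb, hw1, hw0⟩)
    · set φ : E2n n × E2n n → ℝ := fun pw =>
        fderiv ℝ (fderiv ℝ f0) pw.1 pw.2 pw.2 / ‖fderiv ℝ f0 pw.1‖ with hφ
      have hφcont : ContinuousOn φ T := by
        refine ContinuousOn.div hcont2.continuousOn hcont3.continuousOn ?_
        intro pw hpw
        exact norm_ne_zero_iff.2 ((hfprop i.1 i.2 pw.1 (hTsub pw hpw)).1)
      obtain ⟨a, haT, hmin⟩ := hTcpt.exists_isMinOn hTne hφcont
      have hφpos : 0 < φ a := by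
        have h1 := hfprop i.1 i.2 a.1 (hTsub a haT)
        have hane : a.2 ≠ 0 := by
          intro h0
          have := haT.2.2.1
          rw [h0, norm_zero] at this
          norm_num at this
        have hnum : 0 < fderiv ℝ (fderiv ℝ f0) a.1 a.2 a.2 :=
          h1.2 a.2 haT.2.2.2 hane
        have hden : 0 < ‖fderiv ℝ f0 a.1‖ :=
          norm_pos_iff.2 h1.1
        exact div_pos hnum hden
      refine ⟨φ a, hφpos, fun p w hpS hpcb hw1 hw0 => ?_⟩
      have hmem : (p, w) ∈ T := ⟨hpS, hpcb, hw1, hw0⟩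
      exact hmin hmem
  choose lam hlampos hlam using key
  obtain ⟨c, hc0, hcle⟩ : ∃ c : ℝ, 0 < c ∧ ∀ i ∈ t, c ≤ lam i := by
    rcases t.eq_empty_or_nonempty with h | h
    · exact ⟨1, one_pos, by simp [h]⟩
    · obtain ⟨i0, hi0, hmin⟩ := t.exists_min_image lam h
      exact ⟨lam i0, hlampos i0, fun i hi => hmin i hi⟩
  refine ⟨c, hc0, ?_⟩
  rintro x ⟨hxim, hregall⟩
  have hprcont : Continuous fun y : En n => pr x y := by
    have h1 : Continuous fun y : En n => pr x 0 + JL y :=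
      continuous_const.add JL.continuous
    have : (fun y : En n => pr x y) = fun y : En n => pr x 0 + JL y := by
      funext y; rw [← pr_eq_add]
    rw [this]; exact h1
  constructor
  · -- the fiber image is a smooth hypersurface
    intro q hq
    have hpS : pr x q ∈ S := mem_fiberImage_iff.1 hq
    refine ⟨{y | pr x y ∈ U (pr x q) hpS}, fun y => f (pr x q) hpS (pr x y),
      ?_, ?_, ?_, ?_, ?_⟩
    · exact (hUo (pr x q) hpS).preimage hprcont
    · exact hpU (pr x q) hpS
    · exact contDiff_gx _ x (hf (pr x q) hpS)
    · exact fiber_inter x (hSU (pr x q) hpS)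
    · rintro y ⟨hyN, hyV⟩
      have hyS : pr x y ∈ S := mem_fiberImage_iff.1 hyN
      refine gx_deriv_ne (hf (pr x q) hpS) hyS (hUo (pr x q) hpS) hyV
        (hSU (pr x q) hpS) ?_ ?_
      · exact (hfprop (pr x q) hpS (pr x y) ⟨hyS, hyV⟩).1
      · exact hregall (pr x y) hyS rfl
  · -- curvature bound
    intro ν hν1 hν2 hν3 q hq v hv
    rcases eq_or_ne v 0 with rfl | hv0
    · simp
    have hpS : pr x q ∈ S := mem_fiberImage_iff.1 hq
    obtain ⟨i, hit, hpball⟩ : ∃ i ∈ t, pr x q ∈ Metric.ball i.1 (r i.1 i.2) := by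
      have := ht hpS
      simpa using Set.mem_iUnion₂.1 this
    set f0 := f i.1 i.2 with hf0
    set U0 := U i.1 i.2 with hU0
    have hf0C : ContDiff ℝ (⊤ : ℕ∞) f0 := hf i.1 i.2
    have hpcb : pr x q ∈ Metric.closedBall i.1 (r i.1 i.2) :=
      Metric.ball_subset_closedBall hpball
    have hpU0 : pr x q ∈ U0 := hrsub i.1 i.2 hpcb
    set V : Set (En n) := {y | pr x y ∈ U0} with hV
    set g : En n → ℝ := fun y => f0 (pr x y) with hg
    set N : Set (En n) := FiberImage S x with hN
    have hVo : IsOpen V := (hUo i.1 i.2).preimage hprcont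
    have hqV : q ∈ V := hpU0
    have hgC : ContDiff ℝ (⊤ : ℕ∞) g := contDiff_gx _ x hf0C
    have hNV : N ∩ V = {y ∈ V | g y = 0} := fiber_inter x (hSU i.1 i.2)
    have hregN : ∀ y ∈ N ∩ V, fderiv ℝ g y ≠ 0 := by
      rintro y ⟨hyN, hyV⟩
      have hyS : pr x y ∈ S := mem_fiberImage_iff.1 hyN
      refine gx_deriv_ne hf0C hyS (hUo i.1 i.2) hyV (hSU i.1 i.2) ?_ ?_
      · exact (hfprop i.1 i.2 (pr x y) ⟨hyS, hyV⟩).1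
      · exact hregall (pr x y) hyS rfl
    have hformula := local_formula hVo hgC hNV hregN ⟨hq, hqV⟩ hν1 hν2 (hν3 q hq) v hv
    -- identify the Hessian
    have hhess : fderiv ℝ (fderiv ℝ g) q v v =
        fderiv ℝ (fderiv ℝ f0) (pr x q) (JL v) (JL v) := fderiv2_gx f0 x hf0C q v v
    have hJvcone : JL v ∈ tangentConeAt ℝ S (pr x q) := cone_lift hv
    have hzero : ∀ a ∈ S ∩ U0, f0 a = 0 := fun a ha => by
      rw [hSU i.1 i.2] at ha; exact ha.2
    have hJvker : fderiv ℝ f0 (pr x q) (JL v) = 0 :=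
      cone_subset_ker (hUo i.1 i.2) hpU0 hpS hzero
        ((hf0C.differentiable (by simp)) (pr x q)) (JL v) hJvcone
    have hJvne : JL v ≠ 0 := by
      intro h0
      apply hv0
      have := norm_JL v
      rw [h0, norm_zero] at this
      exact norm_eq_zero.1 this.symm
    have hHesspos : 0 < fderiv ℝ (fderiv ℝ f0) (pr x q) (JL v) (JL v) :=
      (hfprop i.1 i.2 (pr x q) ⟨hpS, hpU0⟩).2 (JL v) hJvker hJvne
    -- apply the uniform bound with the normalized vector
    have hvnorm : (0:ℝ) < ‖v‖ := norm_pos_iff.2 hv0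
    set w : E2n n := ‖v‖⁻¹ • JL v with hw
    have hw1 : ‖w‖ = 1 := by
      rw [hw, norm_smul, norm_inv, norm_norm, norm_JL, inv_mul_cancel₀ (ne_of_gt hvnorm)]
    have hw0 : fderiv ℝ f0 (pr x q) w = 0 := by
      rw [hw, _root_.map_smul, hJvker, smul_zero]
    have hlambound := hlam i (pr x q) w hpS hpcb hw1 hw0
    have hhessw : fderiv ℝ (fderiv ℝ f0) (pr x q) w w =
        ‖v‖⁻¹ * (‖v‖⁻¹ * fderiv ℝ (fderiv ℝ f0) (pr x q) (JL v) (JL v)) := by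
      simp only [hw, _root_.map_smul, ContinuousLinearMap.smul_apply, smul_eq_mul]
    have hdfnorm : (0:ℝ) < ‖fderiv ℝ f0 (pr x q)‖ :=
      norm_pos_iff.2 (hfprop i.1 i.2 (pr x q) ⟨hpS, hpU0⟩).1
    have hdgnorm : (0:ℝ) < ‖fderiv ℝ g q‖ :=
      norm_pos_iff.2 (hregN q ⟨hq, hqV⟩)
    have hdgle : ‖fderiv ℝ g q‖ ≤ ‖fderiv ℝ f0 (pr x q)‖ := norm_fderiv_gx_le f0 x hf0C q
    -- assemble the inequality
    have hformula' : |⟪fderivWithin ℝ ν N q v, v⟫| =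
        fderiv ℝ (fderiv ℝ f0) (pr x q) (JL v) (JL v) / ‖fderiv ℝ g q‖ := by
      rw [eq_div_iff (ne_of_gt hdgnorm), mul_comm, hformula, hhess,
        abs_of_pos hHesspos]
    rw [hformula']
    have hstep1 : c * ‖v‖ ^ 2 ≤ lam i * ‖v‖ ^ 2 := by
      have := hcle i hit
      nlinarith [sq_nonneg ‖v‖]
    have hstep2 : lam i * ‖v‖ ^ 2 ≤
        fderiv ℝ (fderiv ℝ f0) (pr x q) (JL v) (JL v) / ‖fderiv ℝ f0 (pr x q)‖ := by
      have hne : ‖v‖ ≠ 0 := ne_of_gt hvnorm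
      have hDne : ‖fderiv ℝ f0 (pr x q)‖ ≠ 0 := ne_of_gt hdfnorm
      have h1 : lam i * ‖fderiv ℝ f0 (pr x q)‖ ≤
          ‖v‖⁻¹ * (‖v‖⁻¹ * fderiv ℝ (fderiv ℝ f0) (pr x q) (JL v) (JL v)) := by
        have h0 := hlambound
        rw [hhessw, le_div_iff₀ hdfnorm] at h0
        exact h0
      have h2 : lam i * ‖fderiv ℝ f0 (pr x q)‖ * (‖v‖^2 / ‖fderiv ℝ f0 (pr x q)‖) ≤
          (‖v‖⁻¹ * (‖v‖⁻¹ * fderiv ℝ (fderiv ℝ f0) (pr x q) (JL v) (JL v))) *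
            (‖v‖^2 / ‖fderiv ℝ f0 (pr x q)‖) :=
        mul_le_mul_of_nonneg_right h1 (by positivity)
      have e1 : lam i * ‖fderiv ℝ f0 (pr x q)‖ * (‖v‖^2 / ‖fderiv ℝ f0 (pr x q)‖) =
          lam i * ‖v‖^2 := by
        field_simp
      have e2 : (‖v‖⁻¹ * (‖v‖⁻¹ * fderiv ℝ (fderiv ℝ f0) (pr x q) (JL v) (JL v))) *
            (‖v‖^2 / ‖fderiv ℝ f0 (pr x q)‖) =
          fderiv ℝ (fderiv ℝ f0) (pr x q) (JL v) (JL v) / ‖fderiv ℝ f0 (pr x q)‖ := by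
        rw [pow_two]
        field_simp
      rw [e1, e2] at h2
      exact h2
    have hstep3 : fderiv ℝ (fderiv ℝ f0) (pr x q) (JL v) (JL v) / ‖fderiv ℝ f0 (pr x q)‖ ≤
        fderiv ℝ (fderiv ℝ f0) (pr x q) (JL v) (JL v) / ‖fderiv ℝ g q‖ :=
      div_le_div_of_nonneg_left (le_of_lt hHesspos) hdgnorm hdgle
    linarith


end
end

section
/- Let R > 0 and α < 0. If f ∈ L¹_loc(ℝⁿ) satisfies f(t) = O(‖t‖^α) as ‖t‖ → ∞, and g = f * χ_{B_R} is the convolution of f with the indicator function of the ball B_R of radius R centered at the origin, then g(t) = O(‖t‖^α) as ‖t‖ → ∞. -/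
/- STATEMENT 3:
Let R > 0 and α < 0.  If f ∈ L¹_loc(ℝⁿ) satisfies f(t) = O(‖t‖^α) as ‖t‖ → ∞,
and g = f * χ_{B_R} is the convolution of f with the indicator function of the
ball B_R of radius R centered at the origin, then g(t) = O(‖t‖^α) as ‖t‖ → ∞. -/

open MeasureTheory

noncomputable section

theorem statement3 (n : ℕ) (R α : ℝ) (hR : 0 < R) (hα : α < 0)
    (f : En n → ℝ) (hf : LocallyIntegrable f (volume : Measure (En n)))
    (C M : ℝ) (hbound : ∀ t : En n, M ≤ ‖t‖ → |f t| ≤ C * ‖t‖ ^ α)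
    (g : En n → ℝ)
    (hg : ∀ t : En n, g t = ∫ u in Metric.closedBall (0 : En n) R, f (t - u)) :
    ∃ C' M' : ℝ, ∀ t : En n, M' ≤ ‖t‖ → |g t| ≤ C' * ‖t‖ ^ α := by
  set V : ℝ := (volume (Metric.closedBall (0 : En n) R)).toReal
  have hV : 0 ≤ V := ENNReal.toReal_nonneg
  set C₀ : ℝ := max C 0
  refine ⟨C₀ / (2 : ℝ) ^ α * V, max (max (M + R) (2 * R)) 1, fun t ht => ?_⟩
  have ht1 : (1 : ℝ) ≤ ‖t‖ := le_trans (le_max_right _ _) ht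
  have htpos : (0 : ℝ) < ‖t‖ := lt_of_lt_of_le one_pos ht1
  have htMR : M + R ≤ ‖t‖ := le_trans (le_trans (le_max_left _ _) (le_max_left _ _)) ht
  have ht2R : 2 * R ≤ ‖t‖ := le_trans (le_trans (le_max_right _ _) (le_max_left _ _)) ht
  have hhalf : (0 : ℝ) < ‖t‖ / 2 := by linarith
  -- pointwise bound on the ball
  have key : ∀ u ∈ Metric.closedBall (0 : En n) R,
      ‖f (t - u)‖ ≤ C₀ * (‖t‖ / 2) ^ α := by
    intro u hu
    rw [Metric.mem_closedBall, dist_zero_right] at hu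
    have hlow : ‖t‖ - R ≤ ‖t - u‖ := by
      have := norm_sub_norm_le t u
      have : ‖t‖ - ‖u‖ ≤ ‖t - u‖ := by
        have h := norm_sub_norm_le t u
        calc ‖t‖ - ‖u‖ ≤ |‖t‖ - ‖u‖| := le_abs_self _
          _ ≤ ‖t - u‖ := abs_norm_sub_norm_le t u
      linarith
    have hM : M ≤ ‖t - u‖ := by linarith
    have hhalfle : ‖t‖ / 2 ≤ ‖t - u‖ := by linarith
    have h1 : |f (t - u)| ≤ C * ‖t - u‖ ^ α := hbound _ hM
    have h2 : ‖t - u‖ ^ α ≤ (‖t‖ / 2) ^ α :=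
      Real.rpow_le_rpow_of_nonpos hhalf hhalfle hα.le
    have hrpos : (0 : ℝ) ≤ ‖t - u‖ ^ α := Real.rpow_nonneg (norm_nonneg _) _
    have hC0 : C ≤ C₀ := le_max_left _ _
    calc ‖f (t - u)‖ = |f (t - u)| := rfl
      _ ≤ C * ‖t - u‖ ^ α := h1
      _ ≤ C₀ * ‖t - u‖ ^ α := by nlinarith
      _ ≤ C₀ * (‖t‖ / 2) ^ α := by
          exact mul_le_mul_of_nonneg_left h2 (le_max_right _ _)
  have hvol : volume (Metric.closedBall (0 : En n) R) < ⊤ :=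
    (isCompact_closedBall _ _).measure_lt_top
  have hmeas : MeasurableSet (Metric.closedBall (0 : En n) R) :=
    measurableSet_closedBall
  have hbd : |g t| ≤ C₀ * (‖t‖ / 2) ^ α * V := by
    rw [hg t]
    exact norm_setIntegral_le_of_norm_le_const_ae' hvol
      (Filter.Eventually.of_forall key)
  have hrw : C₀ * (‖t‖ / 2) ^ α * V = C₀ / (2 : ℝ) ^ α * V * ‖t‖ ^ α := by
    rw [Real.div_rpow htpos.le (by norm_num : (0:ℝ) ≤ 2)]
    have h2pos : (0 : ℝ) < (2 : ℝ) ^ α := Real.rpow_pos_of_pos two_pos α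
    field_simp
  linarith [hbd, hrw ▸ hbd]

end
end

section
/- Let n ≥ 6 and let k : ℝⁿ × ℝⁿ → ℂ be a twice differentiable kernel for which there exist constants C, C₅, R > 0 such that |k(t,u)| ≤ C‖t+u‖^{(1−n)/2} for all t,u; |Δ_t k(t,u)| ≤ C₅‖t+u‖^{(5−n)/2} for all sufficiently large ‖t‖; and k(t,u) = 0 whenever ‖t−u‖ > R. Then there is a constant C₆ such that ∫ |(−Δ_t + ‖t‖²) k(t,u)| du ≤ C₆ ‖t‖^{(5−n)/2} for all sufficiently large ‖t‖; in particular this integral tends to 0 as ‖t‖ → ∞. -/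
/- STATEMENT 17:
Let n ≥ 6 and let k : ℝⁿ × ℝⁿ → ℂ be a twice differentiable kernel for which
there exist constants C, C₅, R > 0 such that |k(t,u)| ≤ C‖t+u‖^{(1−n)/2} for
all t,u; |Δ_t k(t,u)| ≤ C₅‖t+u‖^{(5−n)/2} for all sufficiently large ‖t‖; and
k(t,u) = 0 whenever ‖t−u‖ > R.  Then there is a constant C₆ such that
∫ |(−Δ_t + ‖t‖²) k(t,u)| du ≤ C₆ ‖t‖^{(5−n)/2} for all sufficiently large ‖t‖;
in particular this integral tends to 0 as ‖t‖ → ∞. -/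

open MeasureTheory Filter

noncomputable section

/-- The Laplacian `Δg(t) = ∑ i, ∂²g/∂tᵢ²` of a function on ℝⁿ. -/
def lap {n : ℕ} (g : En n → ℂ) (t : En n) : ℂ :=
  ∑ i : Fin n,
    fderiv ℝ (fun s => fderiv ℝ g s (EuclideanSpace.single i (1 : ℝ))) t
      (EuclideanSpace.single i (1 : ℝ))


lemma lap_eventually_zero {n : ℕ} {g : En n → ℂ} {t : En n}
    (h : ∀ᶠ s in nhds t, g s = 0) : lap g t = 0 := by
  have hf : ∀ᶠ s in nhds t, fderiv ℝ g s = 0 := by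
    obtain ⟨U, hU, hUo, htU⟩ := eventually_nhds_iff.mp h
    refine eventually_nhds_iff.mpr ⟨U, ?_, hUo, htU⟩
    intro s hs
    have hg : g =ᶠ[nhds s] (fun _ => (0:ℂ)) :=
      eventually_nhds_iff.mpr ⟨U, hU, hUo, hs⟩
    rw [hg.fderiv_eq]
    simp
  unfold lap
  refine Finset.sum_eq_zero fun i _ => ?_
  have h2 : (fun s => fderiv ℝ g s (EuclideanSpace.single i (1:ℝ))) =ᶠ[nhds t]
      (fun _ => (0 : ℂ)) := hf.mono (fun s hs => by simp only [hs, ContinuousLinearMap.zero_apply])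
  rw [h2.fderiv_eq]
  simp

theorem statement17 (n : ℕ) (hn : 6 ≤ n) (k : En n → En n → ℂ)
    (hksmooth : ∀ u : En n, ContDiff ℝ 2 (fun t => k t u))
    (C C₅ R M : ℝ) (hC : 0 < C) (hC₅ : 0 < C₅) (hR : 0 < R)
    (hbound : ∀ t u : En n, t + u ≠ 0 → ‖k t u‖ ≤ C * ‖t + u‖ ^ ((1 - n : ℝ) / 2))
    (hlap : ∀ t u : En n, M ≤ ‖t‖ → t + u ≠ 0 →
      ‖lap (fun s => k s u) t‖ ≤ C₅ * ‖t + u‖ ^ ((5 - n : ℝ) / 2))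
    (hsupp : ∀ t u : En n, R < ‖t - u‖ → k t u = 0) :
    (∃ C₆ M' : ℝ, ∀ t : En n, M' ≤ ‖t‖ →
        (∫ u : En n, ‖-(lap (fun s => k s u) t) + ((‖t‖ ^ 2 : ℝ) : ℂ) * k t u‖)
          ≤ C₆ * ‖t‖ ^ ((5 - n : ℝ) / 2)) ∧
    Tendsto
      (fun t : En n =>
        ∫ u : En n, ‖-(lap (fun s => k s u) t) + ((‖t‖ ^ 2 : ℝ) : ℂ) * k t u‖)
      (Bornology.cobounded (En n)) (nhds 0) := by
  set e : ℝ := (5 - n : ℝ) / 2 with he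
  have hen : e < 0 := by
    have : (6:ℝ) ≤ n := by exact_mod_cast hn
    rw [he]; nlinarith
  set V : ℝ := (volume (Metric.closedBall (0 : En n) R)).toReal with hV
  have hVnn : 0 ≤ V := ENNReal.toReal_nonneg
  set C₆ : ℝ := V * (C₅ + C) with hC₆
  set M' : ℝ := max M (max R 1) with hM'
  have key : ∀ t : En n, M' ≤ ‖t‖ →
      (∫ u : En n, ‖-(lap (fun s => k s u) t) + ((‖t‖ ^ 2 : ℝ) : ℂ) * k t u‖)
        ≤ C₆ * ‖t‖ ^ ((5 - n : ℝ) / 2) := by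
    intro t ht
    have htM : M ≤ ‖t‖ := le_trans (le_max_left _ _) ht
    have htR : R ≤ ‖t‖ := le_trans ((le_max_left _ _).trans (le_max_right _ _)) ht
    have ht1 : (1:ℝ) ≤ ‖t‖ := le_trans ((le_max_right _ _).trans (le_max_right _ _)) ht
    have htpos : (0:ℝ) < ‖t‖ := lt_of_lt_of_le one_pos ht1
    set g : En n → ℝ := Set.indicator (Metric.closedBall t R)
      (fun _ => (C₅ + C) * ‖t‖ ^ e) with hg
    have hle : ∀ u : En n,
        ‖-(lap (fun s => k s u) t) + ((‖t‖ ^ 2 : ℝ) : ℂ) * k t u‖ ≤ g u := by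
      intro u
      by_cases hu : u ∈ Metric.closedBall t R
      · -- near the diagonal
        have hdist : ‖t - u‖ ≤ R := by
          rw [Metric.mem_closedBall, dist_comm] at hu
          simpa [dist_eq_norm] using hu
        have htu : ‖t‖ ≤ ‖t + u‖ := by
          have : t + u = 2 • t - (t - u) := by abel
          rw [this]
          have h2t : ‖(2:ℕ) • t‖ = 2 * ‖t‖ := by
            rw [← Nat.cast_smul_eq_nsmul ℝ, norm_smul]; simp
          calc ‖t‖ = 2 * ‖t‖ - ‖t‖ := by ring
            _ ≤ 2 * ‖t‖ - ‖t - u‖ := by linarith [hdist.trans htR]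
            _ = ‖(2:ℕ) • t‖ - ‖t - u‖ := by rw [h2t]
            _ ≤ ‖(2:ℕ) • t - (t - u)‖ := norm_sub_norm_le _ _
        have htune : t + u ≠ 0 := by
          intro h0
          rw [h0, norm_zero] at htu
          exact absurd (le_antisymm htu (norm_nonneg t)) (ne_of_gt htpos)
        have hmono : ∀ p : ℝ, p ≤ 0 → ‖t + u‖ ^ p ≤ ‖t‖ ^ p := fun p hp =>
          Real.rpow_le_rpow_of_nonpos htpos htu hp
        have h1 : ‖lap (fun s => k s u) t‖ ≤ C₅ * ‖t‖ ^ e := by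
          refine (hlap t u htM htune).trans ?_
          exact mul_le_mul_of_nonneg_left (hmono _ (le_of_lt hen)) hC₅.le
        have h2 : ‖t‖ ^ 2 * ‖k t u‖ ≤ C * ‖t‖ ^ e := by
          have hb := hbound t u htune
          have hb2 : ‖k t u‖ ≤ C * ‖t‖ ^ ((1 - n : ℝ)/2) := by
            refine hb.trans ?_
            have h1n : ((1:ℝ) - n)/2 ≤ 0 := by
              have : (6:ℝ) ≤ n := by exact_mod_cast hn
              linarith
            exact mul_le_mul_of_nonneg_left (hmono _ h1n) hC.le
          have heq : ‖t‖ ^ 2 * ‖t‖ ^ ((1 - n : ℝ)/2) = ‖t‖ ^ e := by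
            rw [show (‖t‖:ℝ) ^ 2 = ‖t‖ ^ ((2:ℝ)) by
              rw [← Real.rpow_natCast ‖t‖ 2]; norm_num,
              ← Real.rpow_add htpos, he]
            ring_nf
          calc ‖t‖ ^ 2 * ‖k t u‖ ≤ ‖t‖ ^ 2 * (C * ‖t‖ ^ ((1 - n : ℝ)/2)) := by
                refine mul_le_mul_of_nonneg_left hb2 (by positivity)
            _ = C * (‖t‖ ^ 2 * ‖t‖ ^ ((1 - n : ℝ)/2)) := by ring
            _ = C * ‖t‖ ^ e := by rw [heq]
        calc ‖-(lap (fun s => k s u) t) + ((‖t‖ ^ 2 : ℝ) : ℂ) * k t u‖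
            ≤ ‖-(lap (fun s => k s u) t)‖ + ‖((‖t‖ ^ 2 : ℝ) : ℂ) * k t u‖ :=
              norm_add_le _ _
          _ = ‖lap (fun s => k s u) t‖ + ‖t‖ ^ 2 * ‖k t u‖ := by
              rw [norm_neg, norm_mul, Complex.norm_real]
              rw [Real.norm_of_nonneg (by positivity)]
          _ ≤ C₅ * ‖t‖ ^ e + C * ‖t‖ ^ e := add_le_add h1 h2
          _ = (C₅ + C) * ‖t‖ ^ e := by ring
          _ = g u := by rw [hg, Set.indicator_of_mem hu]
      · -- far from the diagonal: everything vanishes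
        have hdist : R < ‖t - u‖ := by
          rw [Metric.mem_closedBall, not_le, dist_comm, dist_eq_norm] at hu
          exact hu
        have hz : ∀ᶠ s in nhds t, k s u = 0 := by
          have : Metric.ball t (‖t - u‖ - R) ∈ nhds t :=
            Metric.ball_mem_nhds t (by linarith)
          filter_upwards [this] with s hs
          refine hsupp s u ?_
          rw [Metric.mem_ball, dist_eq_norm] at hs
          have : ‖t - u‖ ≤ ‖s - t‖ + ‖s - u‖ := by
            calc ‖t - u‖ = ‖(s - u) - (s - t)‖ := by abel_nf
              _ ≤ ‖s - u‖ + ‖s - t‖ := norm_sub_le _ _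
              _ = ‖s - t‖ + ‖s - u‖ := by ring
          linarith
        have hk0 : k t u = 0 := hz.self_of_nhds
        have hl0 : lap (fun s => k s u) t = 0 := lap_eventually_zero hz
        rw [hl0, hk0]
        simp only [neg_zero, mul_zero, add_zero, norm_zero]
        rw [hg, Set.indicator_of_notMem hu]
    have hgint : Integrable g := by
      rw [hg, integrable_indicator_iff measurableSet_closedBall]
      exact integrableOn_const measure_closedBall_lt_top.ne
    have hmon := integral_mono_of_nonneg
      (Eventually.of_forall fun u => norm_nonneg _) hgint
      (Eventually.of_forall hle)
    refine hmon.trans ?_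
    rw [hg, integral_indicator_const _ measurableSet_closedBall]
    rw [measureReal_def, Measure.addHaar_closedBall_center]
    rw [smul_eq_mul, ← hV, hC₆, he]
    ring_nf
    exact le_rfl
  constructor
  · exact ⟨C₆, M', key⟩
  · have hnorm : Tendsto (fun t : En n => ‖t‖) (Bornology.cobounded (En n)) atTop :=
      tendsto_norm_cobounded_atTop
    have hM'ev : ∀ᶠ t : En n in Bornology.cobounded (En n), M' ≤ ‖t‖ :=
      hnorm.eventually_ge_atTop M'
    refine squeeze_zero' (Eventually.of_forall fun t => integral_nonneg fun u => norm_nonneg _)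
      (hM'ev.mono fun t ht => key t ht) ?_
    have h0 : Tendsto (fun x : ℝ => C₆ * x ^ ((5 - n : ℝ)/2)) atTop (nhds 0) := by
      have := (tendsto_rpow_neg_atTop (y := -((5 - n : ℝ)/2)) (by linarith)).const_mul C₆
      simpa using this
    exact h0.comp hnorm


end
end
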